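/- (Cascade Lemma) Let S be a finite set with |S| ≥ k, a ∉ S, T = S ∪ {a}, and w : T → ℝ strictly positive. Let (X_1,…,X_k) be a k-sample without replacement from S with respect to w, and define (Y_1,…,Y_k) by: Y_1 = a with probability w(a)/w(T), else Y_1 = X_1; and for 1 ≤ i < k, letting Z_i be the unique element of {X_1,…,X_i, a} \ {Y_1,…,Y_i} and U_i = T \ {Y_1,…,Y_i}, set Y_{i+1} = Z_i with probability w(Z_i)/w(U_i), else Y_{i+1} = X_{i+1} (all randomizations independent of everything else). Then for every i = 1,…,k, the ordered tuple (Y_1,…,Y_i) is an i-sample without replacement from T with respect to w; equivalently, for all pairwise distinct y_1,…,y_i ∈ T, P(Y_1 = y_1, …, Y_i = y_i) = ∏_{j=1}^{i} w(y_j)/(w(T) − ∑_{l<j} w(y_l)). -/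

import Mathlib

open MeasureTheory Finset

set_option linter.unusedSectionVars false
set_option linter.unusedVariables false

section Cascade7
variable {Ω α : Type*} [MeasurableSpace Ω] [MeasurableSpace α]
    [MeasurableSingletonClass α] [DecidableEq α]

def evC {k : ℕ} (X : Fin k → Ω → α) (n : ℕ) (x : Fin k → α) : Set Ω :=
  {ω | ∀ l : Fin k, l.val < n → X l ω = x l}

def imgC (k n : ℕ) (x : Fin k → α) : Finset α :=
  (Finset.univ.filter fun l : Fin k => l.val < n).image x

def tupC (S : Finset α) (a : α) (k n : ℕ) : Finset (Fin k → α) :=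
  (Fintype.piFinset fun l : Fin k => if l.val < n then S else {a}).filter
    fun x => ∀ l l' : Fin k, l.val < n → l'.val < n → l ≠ l' → x l ≠ x l'

theorem mem_tupC {S : Finset α} {a : α} {k n : ℕ} {x : Fin k → α} :
    x ∈ tupC S a k n ↔ (∀ l : Fin k, l.val < n → x l ∈ S) ∧ (∀ l : Fin k, n ≤ l.val → x l = a)
      ∧ (∀ l l' : Fin k, l.val < n → l'.val < n → l ≠ l' → x l ≠ x l') := by
  simp only [tupC, Finset.mem_filter, Fintype.mem_piFinset]
  constructor
  · rintro ⟨h1, h2⟩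
    refine ⟨fun l hl => ?_, fun l hl => ?_, h2⟩
    · have := h1 l; rwa [if_pos hl] at this
    · have := h1 l; rwa [if_neg (by omega), Finset.mem_singleton] at this
  · rintro ⟨h1, h2, h3⟩
    refine ⟨fun l => ?_, h3⟩
    by_cases hl : l.val < n
    · rw [if_pos hl]; exact h1 l hl
    · rw [if_neg hl, Finset.mem_singleton]; exact h2 l (by omega)

theorem evC_meas {k : ℕ} {X : Fin k → Ω → α} (hX : ∀ j, Measurable (X j)) (n : ℕ) (x : Fin k → α) :
    MeasurableSet (evC X n x) := by
  have : evC X n x = ⋂ (l : Fin k), ⋂ (_ : l.val < n), (X l) ⁻¹' {x l} := by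
    ext ω; simp [evC]
  rw [this]
  exact MeasurableSet.iInter fun l => MeasurableSet.iInter fun _ =>
    (hX l) (measurableSet_singleton _)

theorem evC_mono {k : ℕ} {X : Fin k → Ω → α} {n n' : ℕ} (h : n ≤ n') (x : Fin k → α) :
    evC X n' x ⊆ evC X n x := fun ω hω l hl => hω l (lt_of_lt_of_le hl h)

theorem evC_disj {k : ℕ} {X : Fin k → Ω → α} {n : ℕ} {x x' : Fin k → α} (l : Fin k)
    (hl : l.val < n) (hne : x l ≠ x' l) : Disjoint (evC X n x) (evC X n x') := by
  rw [Set.disjoint_left]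
  intro ω h1 h2
  exact hne ((h1 l hl).symm.trans (h2 l hl))

theorem tupC_ne {S : Finset α} {a : α} {k n : ℕ} {x x' : Fin k → α}
    (hx : x ∈ tupC S a k n) (hx' : x' ∈ tupC S a k n) (hne : x ≠ x') :
    ∃ l : Fin k, l.val < n ∧ x l ≠ x' l := by
  by_contra hc
  push_neg at hc
  apply hne
  funext l
  by_cases hl : l.val < n
  · exact hc l hl
  · rw [(mem_tupC.mp hx).2.1 l (by omega), (mem_tupC.mp hx').2.1 l (by omega)]

theorem card_filt (k m : ℕ) (h : m ≤ k) :
    ((Finset.univ : Finset (Fin k)).filter fun l => l.val < m).card = m := by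
  have e : ((Finset.univ : Finset (Fin k)).filter fun l => l.val < m)
      = (Finset.range m).attachFin (fun x hx => lt_of_lt_of_le (Finset.mem_range.mp hx) h) := by
    ext l
    simp [Finset.mem_attachFin]
  rw [e, Finset.card_attachFin, Finset.card_range]

theorem imgC_subset {S : Finset α} {k n : ℕ} {x : Fin k → α}
    (hx : ∀ l : Fin k, l.val < n → x l ∈ S) : imgC k n x ⊆ S := by
  intro c hc
  obtain ⟨l, hl, rfl⟩ := Finset.mem_image.mp hc
  exact hx l (Finset.mem_filter.mp hl).2

theorem imgC_card_le {k n : ℕ} (x : Fin k → α) : (imgC k n x).card ≤ n := by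
  by_cases h : n ≤ k
  · exact le_trans Finset.card_image_le (le_of_eq (card_filt k n h))
  · refine le_trans Finset.card_image_le (le_trans (Finset.card_filter_le _ _) ?_)
    simp only [Finset.card_univ, Fintype.card_fin]
    omega

theorem imgC_congr {k n : ℕ} {x x' : Fin k → α} (h : ∀ l : Fin k, l.val < n → x l = x' l) :
    imgC k n x = imgC k n x' :=
  Finset.image_congr fun l hl => h l (Finset.mem_filter.mp hl).2

theorem sdiff_nonempty_pos {S : Finset α} {a : α} {w : α → ℝ}
    (hw : ∀ c ∈ insert a S, 0 < w c) {k n : ℕ} (hk : k ≤ S.card) (hn : n < k)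
    {x : Fin k → α} : 0 < ∑ c ∈ S \ imgC k n x, w c := by
  apply Finset.sum_pos
  · intro c hc
    exact hw c (Finset.mem_insert_of_mem (Finset.mem_sdiff.mp hc).1)
  · have h1 : (imgC k n x).card < S.card := lt_of_le_of_lt (imgC_card_le x) (lt_of_lt_of_le hn hk)
    by_contra hne
    rw [Finset.not_nonempty_iff_eq_empty, Finset.sdiff_eq_empty_iff_subset] at hne
    exact absurd (Finset.card_le_card hne) (by omega)

/-- the total mass of the distinct-tuple events is 1 -/
theorem tup_sum_one {μ : Measure Ω} [IsProbabilityMeasure μ] {S : Finset α} {a : α} {w : α → ℝ}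
    (ha : a ∉ S) (hw : ∀ c ∈ insert a S, 0 < w c) {k : ℕ} (hk : k ≤ S.card)
    {X : Fin k → Ω → α}
    (hXlaw' : ∀ (n : ℕ) (hn : n < k) (x : Fin k → α), (∀ l : Fin k, l.val ≤ n → x l ∈ S) →
      (∀ l l' : Fin k, l.val ≤ n → l'.val ≤ n → l ≠ l' → x l ≠ x l') →
      μ (evC X (n+1) x)
        = ENNReal.ofReal (w (x ⟨n, hn⟩) / ∑ c ∈ S \ imgC k n x, w c) * μ (evC X n x)) :
    ∀ n, n ≤ k → ∑ x ∈ tupC S a k n, μ (evC X n x) = 1 := by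
  intro n
  induction n with
  | zero =>
    intro _
    have e : tupC S a k 0 = {fun _ => a} := by
      ext x
      simp only [mem_tupC, Finset.mem_singleton]
      constructor
      · rintro ⟨-, h2, -⟩; funext l; exact h2 l (Nat.zero_le _)
      · rintro rfl
        exact ⟨fun l hl => absurd hl (Nat.not_lt_zero _), fun l _ => rfl, fun l l' hl => absurd hl (Nat.not_lt_zero _)⟩
    have e2 : evC X 0 (fun _ => a) = Set.univ := by
      ext ω; simp [evC]
    rw [e, Finset.sum_singleton, e2, measure_univ]
  | succ n ih =>
    intro hn1
    have hn : n < k := hn1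
    have ihv := ih (le_of_lt hn)
    -- fiberwise sum over truncation
    have hmaps : ∀ x ∈ tupC S a k (n+1), (fun l : Fin k => if l.val < n then x l else a) ∈ tupC S a k n := by
      intro x hx
      obtain ⟨h1, h2, h3⟩ := mem_tupC.mp hx
      refine mem_tupC.mpr ⟨fun l hl => ?_, fun l hl => ?_, fun l l' hl hl' hne => ?_⟩
      · rw [if_pos hl]; exact h1 l (by omega)
      · rw [if_neg (by omega)]
      · rw [if_pos hl, if_pos hl']; exact h3 l l' (by omega) (by omega) hne
    rw [← Finset.sum_fiberwise_of_maps_to hmaps (fun x => μ (evC X (n+1) x))]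
    have key : ∀ p ∈ tupC S a k n,
        ∑ x ∈ (tupC S a k (n+1)).filter (fun x => (fun l : Fin k => if l.val < n then x l else a) = p),
          μ (evC X (n+1) x) = μ (evC X n p) := by
      intro p hp
      obtain ⟨hp1, hp2, hp3⟩ := mem_tupC.mp hp
      have hterm : ∀ x ∈ (tupC S a k (n+1)).filter
          (fun x => (fun l : Fin k => if l.val < n then x l else a) = p),
          μ (evC X (n+1) x)
            = ENNReal.ofReal (w (x ⟨n, hn⟩) / ∑ c ∈ S \ imgC k n p, w c) * μ (evC X n p) := by
        intro x hx
        obtain ⟨hxt, hxtr⟩ := Finset.mem_filter.mp hx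
        obtain ⟨h1, h2, h3⟩ := mem_tupC.mp hxt
        have hagree : ∀ l : Fin k, l.val < n → x l = p l := by
          intro l hl
          rw [← congrFun hxtr l, if_pos hl]
        have himg : imgC k n x = imgC k n p := imgC_congr hagree
        have hev : evC X n x = evC X n p := by
          ext ω
          constructor <;> intro hω l hl
          · rw [← hagree l hl]; exact hω l hl
          · rw [hagree l hl]; exact hω l hl
        rw [hXlaw' n hn x (fun l hl => h1 l (by omega))
          (fun l l' hl hl' hne => h3 l l' (by omega) (by omega) hne), himg, hev]
      rw [Finset.sum_congr rfl hterm, ← Finset.sum_mul]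
      have hsum : ∑ x ∈ (tupC S a k (n+1)).filter
          (fun x => (fun l : Fin k => if l.val < n then x l else a) = p),
          ENNReal.ofReal (w (x ⟨n, hn⟩) / ∑ c ∈ S \ imgC k n p, w c)
          = ∑ b ∈ S \ imgC k n p, ENNReal.ofReal (w b / ∑ c ∈ S \ imgC k n p, w c) := by
        apply Finset.sum_nbij' (i := fun x => x ⟨n, hn⟩)
          (j := fun b => fun l : Fin k => if l.val < n then p l else if l.val = n then b else a)
        · intro x hx
          obtain ⟨hxt, hxtr⟩ := Finset.mem_filter.mp hx
          obtain ⟨h1, h2, h3⟩ := mem_tupC.mp hxt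
          have hagree : ∀ l : Fin k, l.val < n → x l = p l := by
            intro l hl
            rw [← congrFun hxtr l, if_pos hl]
          refine Finset.mem_sdiff.mpr ⟨h1 ⟨n, hn⟩ (by simp), fun hmem => ?_⟩
          obtain ⟨l, hl, hle⟩ := Finset.mem_image.mp hmem
          have hl2 := (Finset.mem_filter.mp hl).2
          refine h3 l ⟨n, hn⟩ (by omega) (by simp) (fun hc => ?_) ?_
          · rw [hc] at hl2; simp at hl2
          · rw [hagree l hl2]; exact hle
        · intro b hb
          obtain ⟨hbS, hbimg⟩ := Finset.mem_sdiff.mp hb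
          refine Finset.mem_filter.mpr ⟨mem_tupC.mpr ⟨fun l hl => ?_, fun l hl => ?_, fun l l' hl hl' hne => ?_⟩, ?_⟩
          · by_cases h : l.val < n
            · rw [if_pos h]; exact hp1 l h
            · have : l.val = n := by omega
              rw [if_neg h, if_pos this]; exact hbS
          · rw [if_neg (by omega), if_neg (by omega)]
          · -- distinctness of the extended tuple
            by_cases h : l.val < n <;> by_cases h' : l'.val < n
            · rw [if_pos h, if_pos h']; exact hp3 l l' h h' hne
            · have : l'.val = n := by omega
              rw [if_pos h, if_neg h', if_pos this]
              intro hc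
              exact hbimg (Finset.mem_image.mpr ⟨l, Finset.mem_filter.mpr ⟨Finset.mem_univ _, h⟩, hc⟩)
            · have : l.val = n := by omega
              rw [if_neg h, if_pos this, if_pos h']
              intro hc
              exact hbimg (Finset.mem_image.mpr ⟨l', Finset.mem_filter.mpr ⟨Finset.mem_univ _, h'⟩, hc.symm⟩)
            · exact absurd (Fin.ext (by omega) : l = l') hne
          · funext l
            show (if l.val < n then (if l.val < n then p l else if l.val = n then b else a) else a) = p l
            by_cases h : l.val < n
            · rw [if_pos h, if_pos h]
            · rw [if_neg h]
              exact (hp2 l (by omega)).symm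
        · -- left inverse
          intro x hx
          obtain ⟨hxt, hxtr⟩ := Finset.mem_filter.mp hx
          obtain ⟨h1, h2, h3⟩ := mem_tupC.mp hxt
          have hagree : ∀ l : Fin k, l.val < n → x l = p l := by
            intro l hl
            rw [← congrFun hxtr l, if_pos hl]
          funext l
          show (if l.val < n then p l else if l.val = n then x ⟨n, hn⟩ else a) = x l
          by_cases h : l.val < n
          · rw [if_pos h, ← hagree l h]
          · by_cases h' : l.val = n
            · rw [if_neg h, if_pos h']
              have : l = ⟨n, hn⟩ := Fin.ext (by simp [h'])
              rw [this]
            · rw [if_neg h, if_neg h']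
              exact (h2 l (by omega)).symm
        · intro b hb
          show (if ((⟨n, hn⟩ : Fin k) : ℕ) < n then p ⟨n, hn⟩ else if ((⟨n, hn⟩ : Fin k) : ℕ) = n then b else a) = b
          simp
        · intro x hx
          rfl
      rw [hsum]
      have hpos : 0 < ∑ c ∈ S \ imgC k n p, w c := sdiff_nonempty_pos hw hk hn
      have : ∑ b ∈ S \ imgC k n p, ENNReal.ofReal (w b / ∑ c ∈ S \ imgC k n p, w c) = 1 := by
        rw [← ENNReal.ofReal_sum_of_nonneg]
        · rw [← Finset.sum_div, div_self (ne_of_gt hpos), ENNReal.ofReal_one]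
        · intro b hb
          exact div_nonneg (le_of_lt (hw b (Finset.mem_insert_of_mem (Finset.mem_sdiff.mp hb).1))) (le_of_lt hpos)
      rw [this, one_mul]
    rw [Finset.sum_congr rfl key, ihv]
theorem filtFin {k m : ℕ} (hm : m < k) :
    (Finset.univ.filter (· < (⟨m, hm⟩ : Fin k))) = Finset.univ.filter fun l : Fin k => l.val < m := by
  ext l; simp [Fin.lt_def]

/-- the good set where the `X l` are pairwise distinct -/
def DgC (S : Finset α) (a : α) {k : ℕ} (X : Fin k → Ω → α) : Set Ω :=
  ⋃ x ∈ tupC S a k k, evC X k x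

theorem DgC_meas {S : Finset α} {a : α} {k : ℕ} {X : Fin k → Ω → α}
    (hXmeas : ∀ j, Measurable (X j)) : MeasurableSet (DgC S a X) :=
  Set.Finite.measurableSet_biUnion (Finset.finite_toSet _) fun x _ => evC_meas hXmeas k x

theorem mem_DgC {S : Finset α} {a : α} {k : ℕ} {X : Fin k → Ω → α}
    (hXS : ∀ (j : Fin k) (ω : Ω), X j ω ∈ S) (ω : Ω) :
    ω ∈ DgC S a X ↔ ∀ l l' : Fin k, l ≠ l' → X l ω ≠ X l' ω := by
  constructor
  · intro hω l l' hne
    simp only [DgC, Set.mem_iUnion] at hω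
    obtain ⟨x, hx, hωx⟩ := hω
    rw [hωx l l.isLt, hωx l' l'.isLt]
    exact (mem_tupC.mp hx).2.2 l l' l.isLt l'.isLt hne
  · intro hinj
    simp only [DgC, Set.mem_iUnion]
    refine ⟨fun l => X l ω, mem_tupC.mpr ⟨fun l _ => hXS l ω, fun l hl => absurd hl (by omega),
      fun l l' _ _ hne => hinj l l' hne⟩, fun l _ => rfl⟩

theorem tupC_pairwise_disj {S : Finset α} {a : α} {k n : ℕ} {X : Fin k → Ω → α}
    {x x' : Fin k → α} (hx : x ∈ tupC S a k n) (hx' : x' ∈ tupC S a k n) (hne : x ≠ x') :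
    Disjoint (evC X n x) (evC X n x') := by
  obtain ⟨l, hl, hlne⟩ := tupC_ne hx hx' hne
  exact evC_disj l hl hlne

theorem DgC_compl_null {μ : Measure Ω} [IsProbabilityMeasure μ] {S : Finset α} {a : α} {k : ℕ}
    {X : Fin k → Ω → α} (hXmeas : ∀ j, Measurable (X j))
    (hsum : ∑ x ∈ tupC S a k k, μ (evC X k x) = 1) :
    μ (DgC S a X)ᶜ = 0 := by
  have h1 : μ (DgC S a X) = 1 := by
    rw [DgC, measure_biUnion_finset ?hd ?hm]
    · exact hsum
    case hd =>
      intro x hx x' hx' hne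
      exact tupC_pairwise_disj hx hx' hne
    case hm =>
      intro x _
      exact evC_meas hXmeas k x
  rw [measure_compl (DgC_meas hXmeas) (measure_ne_top μ _), h1, measure_univ, tsub_self]

theorem measD {μ : Measure Ω} [IsProbabilityMeasure μ] {S : Finset α} {a : α} {k : ℕ}
    {X : Fin k → Ω → α} (hXmeas : ∀ j, Measurable (X j))
    (hsum : ∑ x ∈ tupC S a k k, μ (evC X k x) = 1) (A : Set Ω) :
    μ A = μ (A ∩ DgC S a X) := by
  have := measure_inter_add_diff (μ := μ) A (DgC_meas (S := S) (a := a) (X := X) hXmeas)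
  have h0 : μ (A \ DgC S a X) = 0 :=
    le_antisymm (le_trans (measure_mono (Set.diff_subset_compl _ _)) (le_of_eq (DgC_compl_null hXmeas hsum))) zero_le
  rw [← this, h0, add_zero]

theorem measDeq {μ : Measure Ω} [IsProbabilityMeasure μ] {S : Finset α} {a : α} {k : ℕ}
    {X : Fin k → Ω → α} (hXmeas : ∀ j, Measurable (X j))
    (hsum : ∑ x ∈ tupC S a k k, μ (evC X k x) = 1) {A C : Set Ω}
    (h : A ∩ DgC S a X = C ∩ DgC S a X) : μ A = μ C := by
  rw [measD hXmeas hsum A, h, ← measD hXmeas hsum C]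

/-- partition of any measurable event by the prefix values of `X` -/
theorem partC {μ : Measure Ω} [IsProbabilityMeasure μ] {S : Finset α} {a : α} {k : ℕ}
    {X : Fin k → Ω → α} (hXmeas : ∀ j, Measurable (X j))
    (hXS : ∀ (j : Fin k) (ω : Ω), X j ω ∈ S)
    (hsum : ∑ x ∈ tupC S a k k, μ (evC X k x) = 1)
    {n : ℕ} (hn : n ≤ k) {E : Set Ω} (hE : MeasurableSet E) :
    μ E = ∑ p ∈ tupC S a k n, μ (E ∩ evC X n p) := by
  have hU : μ (⋃ p ∈ tupC S a k n, E ∩ evC X n p) = ∑ p ∈ tupC S a k n, μ (E ∩ evC X n p) := by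
    apply measure_biUnion_finset
    · intro x hx x' hx' hne
      exact Set.disjoint_of_subset Set.inter_subset_right Set.inter_subset_right
        (tupC_pairwise_disj hx hx' hne)
    · intro x _
      exact hE.inter (evC_meas hXmeas n x)
  rw [← hU]
  apply le_antisymm
  · rw [measD hXmeas hsum E]
    apply measure_mono
    rintro ω ⟨hωE, hωD⟩
    have hinj := (mem_DgC hXS ω).mp hωD
    refine Set.mem_iUnion₂.mpr ⟨fun l => if l.val < n then X l ω else a, ?_, hωE, ?_⟩
    · exact Finset.mem_coe.mpr (mem_tupC.mpr ⟨fun l hl => by rw [if_pos hl]; exact hXS l ω,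
        fun l hl => by rw [if_neg (by omega)],
        fun l l' hl hl' hne => by rw [if_pos hl, if_pos hl']; exact hinj l l' hne⟩)
    · intro l hl
      show X l ω = if l.val < n then X l ω else a
      rw [if_pos hl]
  · apply measure_mono
    exact Set.iUnion₂_subset fun p _ => Set.inter_subset_left

/-- the conditional coin-flip probability, for events pinning a prefix of `X` of length `n ≥ m`
    and the first `m` values of `Y`. -/
theorem coinC {μ : Measure Ω} [IsProbabilityMeasure μ] {S : Finset α} {a : α} {w : α → ℝ} {k : ℕ}
    {X Y : Fin k → Ω → α} {B : Fin k → Set Ω}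
    (hXmeas : ∀ j, Measurable (X j)) (hYmeas : ∀ j, Measurable (Y j))
    (hBmeas : ∀ i, MeasurableSet (B i))
    (hXS : ∀ (j : Fin k) (ω : Ω), X j ω ∈ S)
    (hsum : ∑ x ∈ tupC S a k k, μ (evC X k x) = 1)
    (hBcond : ∀ (i : Fin k) (x y : Fin k → α) (Z : α),
      insert a ((Finset.univ.filter (· < i)).image x) \
          ((Finset.univ.filter (· < i)).image y) = {Z} →
      μ (B i ∩ {ω | (∀ l, X l ω = x l) ∧ ∀ l, l < i → Y l ω = y l}) =
        ENNReal.ofReal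
            (w Z /
              ∑ c ∈ (insert a S) \ (Finset.univ.filter (· < i)).image y, w c) *
          μ {ω | (∀ l, X l ω = x l) ∧ ∀ l, l < i → Y l ω = y l})
    {m n : ℕ} (hm : m < k) (hmn : m ≤ n) (hnk : n ≤ k) (p y : Fin k → α) (Z : α)
    (hZ : insert a (imgC k m p) \ imgC k m y = {Z}) :
    μ (B ⟨m, hm⟩ ∩ (evC X n p ∩ evC Y m y))
      = ENNReal.ofReal (w Z / ∑ c ∈ insert a S \ imgC k m y, w c)
        * μ (evC X n p ∩ evC Y m y) := by
  set c := ENNReal.ofReal (w Z / ∑ c ∈ insert a S \ imgC k m y, w c) with hc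
  have hfy : (Finset.univ.filter (· < (⟨m, hm⟩ : Fin k))).image y = imgC k m y := by
    rw [filtFin hm]; rfl
  have hkey : ∀ x ∈ tupC S a k k,
      μ ((B ⟨m, hm⟩ ∩ (evC X n p ∩ evC Y m y)) ∩ evC X k x)
        = c * μ ((evC X n p ∩ evC Y m y) ∩ evC X k x) := by
    intro x hx
    by_cases hext : ∀ l : Fin k, l.val < n → x l = p l
    · have he : (evC X n p ∩ evC Y m y) ∩ evC X k x = evC X k x ∩ evC Y m y := by
        ext ω
        constructor
        · rintro ⟨⟨-, h2⟩, h3⟩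
          exact ⟨h3, h2⟩
        · rintro ⟨h1, h2⟩
          exact ⟨⟨fun l hl => by rw [h1 l (lt_of_lt_of_le hl hnk)]; exact hext l hl, h2⟩, h1⟩
      have hsing : insert a ((Finset.univ.filter (· < (⟨m, hm⟩ : Fin k))).image x) \
          ((Finset.univ.filter (· < (⟨m, hm⟩ : Fin k))).image y) = {Z} := by
        rw [hfy, filtFin hm]
        have : (Finset.univ.filter fun l : Fin k => l.val < m).image x = imgC k m p :=
          imgC_congr fun l hl => hext l (lt_of_lt_of_le hl hmn)
        rw [this]
        exact hZ
      have hb := hBcond ⟨m, hm⟩ x y Z hsing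
      have hev : {ω | (∀ l, X l ω = x l) ∧ ∀ l, l < (⟨m, hm⟩ : Fin k) → Y l ω = y l}
          = evC X k x ∩ evC Y m y := by
        ext ω
        simp only [Set.mem_setOf_eq, Set.mem_inter_iff, evC, Fin.lt_def]
        constructor
        · rintro ⟨h1, h2⟩
          exact ⟨fun l _ => h1 l, h2⟩
        · rintro ⟨h1, h2⟩
          exact ⟨fun l => h1 l l.isLt, h2⟩
      rw [hfy, hev] at hb
      have hassoc : (B ⟨m, hm⟩ ∩ (evC X n p ∩ evC Y m y)) ∩ evC X k x
          = B ⟨m, hm⟩ ∩ (evC X k x ∩ evC Y m y) := by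
        rw [Set.inter_assoc, he]
      rw [hassoc, he, hc]
      exact hb
    · push_neg at hext
      obtain ⟨l, hl, hlne⟩ := hext
      have hemp : (evC X n p ∩ evC Y m y) ∩ evC X k x = ∅ := by
        rw [Set.eq_empty_iff_forall_notMem]
        rintro ω ⟨⟨h1, -⟩, h3⟩
        exact hlne ((h3 l l.isLt).symm.trans (h1 l hl))
      rw [hemp, measure_empty, mul_zero]
      refine le_antisymm ?_ zero_le
      calc μ ((B ⟨m, hm⟩ ∩ (evC X n p ∩ evC Y m y)) ∩ evC X k x)
          ≤ μ ((evC X n p ∩ evC Y m y) ∩ evC X k x) :=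
            measure_mono fun ω hω => ⟨hω.1.2, hω.2⟩
        _ = 0 := by rw [hemp, measure_empty]
  have hmeasE : MeasurableSet (evC X n p ∩ evC Y m y) :=
    (evC_meas hXmeas n p).inter (evC_meas hYmeas m y)
  rw [partC hXmeas hXS hsum le_rfl (E := B ⟨m, hm⟩ ∩ (evC X n p ∩ evC Y m y)) ((hBmeas _).inter hmeasE),
    partC hXmeas hXS hsum le_rfl hmeasE, Finset.sum_congr rfl hkey, ← Finset.mul_sum]

theorem filt_succ (k m : ℕ) (h : m < k) :
    ((Finset.univ : Finset (Fin k)).filter fun l => l.val < m + 1)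
      = insert (⟨m, h⟩ : Fin k) ((Finset.univ : Finset (Fin k)).filter fun l => l.val < m) := by
  ext l
  simp only [Finset.mem_filter, Finset.mem_insert, Finset.mem_univ, true_and, Fin.ext_iff]
  omega

theorem cascadeP1 {Ω α : Type*} [DecidableEq α] (S : Finset α) (a : α) (ha : a ∉ S) (k : ℕ)
    (X : Fin k → Ω → α) (B : Fin k → Set Ω) (Y : Fin k → Ω → α)
    (hXS : ∀ (j : Fin k) (ω : Ω), X j ω ∈ S)
    (hY0 : ∀ (h0 : 0 < k) (ω : Ω),
      (ω ∈ B ⟨0, h0⟩ → Y ⟨0, h0⟩ ω = a) ∧ (ω ∉ B ⟨0, h0⟩ → Y ⟨0, h0⟩ ω = X ⟨0, h0⟩ ω))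
    (hYsucc : ∀ (i : ℕ) (hi : i + 1 < k) (ω : Ω) (Z : α),
      insert a ((Finset.univ.filter fun l : Fin k => l.val ≤ i).image fun l => X l ω) \
          ((Finset.univ.filter fun l : Fin k => l.val ≤ i).image fun l => Y l ω) = {Z} →
      (ω ∈ B ⟨i + 1, hi⟩ → Y ⟨i + 1, hi⟩ ω = Z) ∧
        (ω ∉ B ⟨i + 1, hi⟩ → Y ⟨i + 1, hi⟩ ω = X ⟨i + 1, hi⟩ ω))
    (ω : Ω) (hinj : ∀ l l' : Fin k, l ≠ l' → X l ω ≠ X l' ω) :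
    ∀ m : ℕ, m < k →
      ((Finset.univ.filter fun l : Fin k => l.val ≤ m).image fun l => Y l ω) ⊆
          insert a ((Finset.univ.filter fun l : Fin k => l.val ≤ m).image fun l => X l ω) ∧
        ((Finset.univ.filter fun l : Fin k => l.val ≤ m).image fun l => Y l ω).card = m + 1 := by
  have hfilt : ∀ m : ℕ, (Finset.univ.filter fun l : Fin k => l.val ≤ m)
      = (Finset.univ.filter fun l : Fin k => l.val < m + 1) := by
    intro m; apply Finset.filter_congr; intro l _; simp [Nat.lt_succ_iff]
  have hXcard : ∀ m : ℕ, m < k →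
      ((Finset.univ.filter fun l : Fin k => l.val ≤ m).image fun l => X l ω).card = m + 1 := by
    intro m hm
    rw [hfilt, Finset.card_image_of_injOn (fun l _ l' _ h => by
      by_contra hne; exact hinj l l' hne h), card_filt k (m+1) hm]
  have haX : ∀ m : ℕ, a ∉ ((Finset.univ.filter fun l : Fin k => l.val ≤ m).image fun l => X l ω) := by
    intro m hmem
    obtain ⟨l, _, hl⟩ := Finset.mem_image.mp hmem
    exact ha (hl ▸ hXS l ω)
  intro m
  induction m with
  | zero =>
    intro h0
    have e : (Finset.univ.filter fun l : Fin k => l.val ≤ 0) = {(⟨0, h0⟩ : Fin k)} := by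
      ext l
      simp [Fin.ext_iff, Nat.le_zero]
    rw [e]
    simp only [Finset.image_singleton, Finset.card_singleton, and_true]
    intro c hc
    rw [Finset.mem_singleton] at hc
    subst hc
    by_cases hB : ω ∈ B ⟨0, h0⟩
    · rw [(hY0 h0 ω).1 hB]; exact Finset.mem_insert_self _ _
    · rw [(hY0 h0 ω).2 hB]; exact Finset.mem_insert_of_mem (Finset.mem_singleton_self _)
  | succ m ih =>
    intro hm1
    have hm : m < k := Nat.lt_of_succ_lt hm1
    obtain ⟨hsub, hcard⟩ := ih hm
    -- singleton
    have hsd : (insert a ((Finset.univ.filter fun l : Fin k => l.val ≤ m).image fun l => X l ω) \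
        ((Finset.univ.filter fun l : Fin k => l.val ≤ m).image fun l => Y l ω)).card = 1 := by
      rw [Finset.card_sdiff_of_subset hsub, Finset.card_insert_of_notMem (haX m), hXcard m hm, hcard]; omega
    obtain ⟨Z, hZ⟩ := Finset.card_eq_one.mp hsd
    have hZmem : Z ∈ insert a ((Finset.univ.filter fun l : Fin k => l.val ≤ m).image fun l => X l ω) ∧
        Z ∉ ((Finset.univ.filter fun l : Fin k => l.val ≤ m).image fun l => Y l ω) := by
      have : Z ∈ insert a ((Finset.univ.filter fun l : Fin k => l.val ≤ m).image fun l => X l ω) \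
          ((Finset.univ.filter fun l : Fin k => l.val ≤ m).image fun l => Y l ω) := by
        rw [hZ]; exact Finset.mem_singleton_self _
      exact Finset.mem_sdiff.mp this
    have hY := hYsucc m hm1 ω Z hZ
    have efilt : (Finset.univ.filter fun l : Fin k => l.val ≤ m + 1)
        = insert (⟨m + 1, hm1⟩ : Fin k) (Finset.univ.filter fun l : Fin k => l.val ≤ m) := by
      rw [hfilt, hfilt, filt_succ k (m+1) hm1]
    have eY : ((Finset.univ.filter fun l : Fin k => l.val ≤ m + 1).image fun l => Y l ω)
        = insert (Y ⟨m + 1, hm1⟩ ω) ((Finset.univ.filter fun l : Fin k => l.val ≤ m).image fun l => Y l ω) := by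
      rw [efilt, Finset.image_insert]
    have eX : ((Finset.univ.filter fun l : Fin k => l.val ≤ m + 1).image fun l => X l ω)
        = insert (X ⟨m + 1, hm1⟩ ω) ((Finset.univ.filter fun l : Fin k => l.val ≤ m).image fun l => X l ω) := by
      rw [efilt, Finset.image_insert]
    have hXnew : X ⟨m + 1, hm1⟩ ω ∉ insert a ((Finset.univ.filter fun l : Fin k => l.val ≤ m).image fun l => X l ω) := by
      intro hmem
      rcases Finset.mem_insert.mp hmem with h | h
      · exact ha (h ▸ hXS ⟨m + 1, hm1⟩ ω)
      · obtain ⟨l, hl, hl2⟩ := Finset.mem_image.mp h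
        have : l ≠ ⟨m + 1, hm1⟩ := by
          intro h'; subst h'
          simp only [Finset.mem_filter] at hl
          omega
        exact hinj l ⟨m + 1, hm1⟩ this hl2
    have hYval : Y ⟨m + 1, hm1⟩ ω = Z ∨ Y ⟨m + 1, hm1⟩ ω = X ⟨m + 1, hm1⟩ ω := by
      by_cases hB : ω ∈ B ⟨m + 1, hm1⟩
      · exact Or.inl (hY.1 hB)
      · exact Or.inr (hY.2 hB)
    have hYnew : Y ⟨m + 1, hm1⟩ ω ∉ ((Finset.univ.filter fun l : Fin k => l.val ≤ m).image fun l => Y l ω) := by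
      rcases hYval with h | h <;> rw [h]
      · exact hZmem.2
      · exact fun hmem => hXnew (hsub hmem)
    constructor
    · rw [eY, eX]
      intro c hc
      rcases Finset.mem_insert.mp hc with h | h
      · subst h
        rcases hYval with h | h <;> rw [h]
        · rcases Finset.mem_insert.mp hZmem.1 with h' | h'
          · exact h' ▸ Finset.mem_insert_self _ _
          · exact Finset.mem_insert_of_mem (Finset.mem_insert_of_mem h')
        · exact Finset.mem_insert_of_mem (Finset.mem_insert_self _ _)
      · rcases Finset.mem_insert.mp (hsub h) with h' | h'
        · exact h' ▸ Finset.mem_insert_self _ _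
        · exact Finset.mem_insert_of_mem (Finset.mem_insert_of_mem h')
    · rw [eY, Finset.card_insert_of_notMem hYnew, hcard]

theorem filt_le_lt (k m : ℕ) :
    ((Finset.univ : Finset (Fin k)).filter fun l => l.val ≤ m)
      = (Finset.univ : Finset (Fin k)).filter fun l => l.val < m + 1 := by
  ext l; simp [Nat.lt_succ_iff]

theorem imgC_zero {k : ℕ} (x : Fin k → α) : imgC k 0 x = ∅ := by
  simp [imgC]

theorem evC_succ {k : ℕ} {X : Fin k → Ω → α} {n : ℕ} (hn : n < k) (x : Fin k → α) :
    evC X (n + 1) x = evC X n x ∩ {ω | X ⟨n, hn⟩ ω = x ⟨n, hn⟩} := by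
  ext ω
  constructor
  · intro hω
    exact ⟨fun l hl => hω l (by omega), hω ⟨n, hn⟩ (by simp)⟩
  · rintro ⟨h1, h2⟩ l hl
    by_cases h : l.val < n
    · exact h1 l h
    · have : l = ⟨n, hn⟩ := Fin.ext (by simp; omega)
      rw [this]; exact h2

/-- pointwise: on the good set, the first `m` values of `Y` lie in `{X_0,…,X_{m-1},a}` -/
theorem pwsubC {S : Finset α} {a : α} {k : ℕ} {X Y : Fin k → Ω → α} {B : Fin k → Set Ω}
    (ha : a ∉ S)
    (hXS : ∀ (j : Fin k) (ω : Ω), X j ω ∈ S)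
    (hY0 : ∀ (h0 : 0 < k) (ω : Ω),
      (ω ∈ B ⟨0, h0⟩ → Y ⟨0, h0⟩ ω = a) ∧ (ω ∉ B ⟨0, h0⟩ → Y ⟨0, h0⟩ ω = X ⟨0, h0⟩ ω))
    (hYsucc : ∀ (i : ℕ) (hi : i + 1 < k) (ω : Ω) (Z : α),
      insert a ((Finset.univ.filter fun l : Fin k => l.val ≤ i).image fun l => X l ω) \
          ((Finset.univ.filter fun l : Fin k => l.val ≤ i).image fun l => Y l ω) = {Z} →
      (ω ∈ B ⟨i + 1, hi⟩ → Y ⟨i + 1, hi⟩ ω = Z) ∧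
        (ω ∉ B ⟨i + 1, hi⟩ → Y ⟨i + 1, hi⟩ ω = X ⟨i + 1, hi⟩ ω))
    (m : ℕ) (hmk : m ≤ k) (p y : Fin k → α) (ω : Ω)
    (hD : ω ∈ DgC S a X) (hX : ω ∈ evC X m p) (hY : ω ∈ evC Y m y) :
    imgC k m y ⊆ insert a (imgC k m p) := by
  cases m with
  | zero => rw [imgC_zero]; exact Finset.empty_subset _
  | succ m' =>
    have hinj : ∀ l l' : Fin k, l ≠ l' → X l ω ≠ X l' ω := (mem_DgC hXS ω).mp hD
    have hm' : m' < k := hmk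
    have hP := (cascadeP1 S a ha k X B Y hXS hY0 hYsucc ω hinj m' hm').1
    have h1 : imgC k (m' + 1) y = (Finset.univ.filter fun l : Fin k => l.val ≤ m').image fun l => Y l ω := by
      rw [filt_le_lt]
      exact imgC_congr fun l hl => (hY l hl).symm
    have h2 : imgC k (m' + 1) p = (Finset.univ.filter fun l : Fin k => l.val ≤ m').image fun l => X l ω := by
      rw [filt_le_lt]
      exact imgC_congr fun l hl => (hX l hl).symm
    rw [h1, h2]
    exact hP

/-- pointwise: on the good set, given pinned history and the residual element `Z`,
the coin determines `Y_m`. -/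
theorem pwC {S : Finset α} {a : α} {k : ℕ} {X Y : Fin k → Ω → α} {B : Fin k → Set Ω}
    (ha : a ∉ S)
    (hXS : ∀ (j : Fin k) (ω : Ω), X j ω ∈ S)
    (hY0 : ∀ (h0 : 0 < k) (ω : Ω),
      (ω ∈ B ⟨0, h0⟩ → Y ⟨0, h0⟩ ω = a) ∧ (ω ∉ B ⟨0, h0⟩ → Y ⟨0, h0⟩ ω = X ⟨0, h0⟩ ω))
    (hYsucc : ∀ (i : ℕ) (hi : i + 1 < k) (ω : Ω) (Z : α),
      insert a ((Finset.univ.filter fun l : Fin k => l.val ≤ i).image fun l => X l ω) \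
          ((Finset.univ.filter fun l : Fin k => l.val ≤ i).image fun l => Y l ω) = {Z} →
      (ω ∈ B ⟨i + 1, hi⟩ → Y ⟨i + 1, hi⟩ ω = Z) ∧
        (ω ∉ B ⟨i + 1, hi⟩ → Y ⟨i + 1, hi⟩ ω = X ⟨i + 1, hi⟩ ω))
    (m : ℕ) (hm : m < k) (p y : Fin k → α) (Z : α)
    (hZ : insert a (imgC k m p) \ imgC k m y = {Z})
    (ω : Ω) (hD : ω ∈ DgC S a X) (hX : ω ∈ evC X m p) (hY : ω ∈ evC Y m y) :
    (Y ⟨m, hm⟩ ω = Z ↔ ω ∈ B ⟨m, hm⟩) ∧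
      (ω ∉ B ⟨m, hm⟩ → Y ⟨m, hm⟩ ω = X ⟨m, hm⟩ ω) ∧ Z ≠ X ⟨m, hm⟩ ω := by
  have hinj : ∀ l l' : Fin k, l ≠ l' → X l ω ≠ X l' ω := (mem_DgC hXS ω).mp hD
  have hZin : Z ∈ insert a (imgC k m p) ∧ Z ∉ imgC k m y := by
    have : Z ∈ insert a (imgC k m p) \ imgC k m y := by
      rw [hZ]; exact Finset.mem_singleton_self _
    exact Finset.mem_sdiff.mp this
  have hZX : Z ≠ X ⟨m, hm⟩ ω := by
    rcases Finset.mem_insert.mp hZin.1 with h | h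
    · rw [h]; intro hc; exact ha (hc ▸ hXS ⟨m, hm⟩ ω)
    · obtain ⟨l, hl, rfl⟩ := Finset.mem_image.mp h
      have hl2 := (Finset.mem_filter.mp hl).2
      rw [← hX l hl2]
      exact hinj l ⟨m, hm⟩ (fun hc => by rw [hc] at hl2; simp at hl2)
  have hpair : (ω ∈ B ⟨m, hm⟩ → Y ⟨m, hm⟩ ω = Z) ∧
      (ω ∉ B ⟨m, hm⟩ → Y ⟨m, hm⟩ ω = X ⟨m, hm⟩ ω) := by
    cases m with
    | zero =>
      have hZa : Z = a := by
        have : insert a (imgC k 0 p) \ imgC k 0 y = {a} := by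
          rw [imgC_zero, imgC_zero, Finset.sdiff_empty]
          rfl
        rw [this] at hZ
        exact (Finset.singleton_inj.mp hZ).symm
      rw [hZa]
      exact hY0 hm ω
    | succ m' =>
      apply hYsucc m' hm ω Z
      have h1 : ((Finset.univ.filter fun l : Fin k => l.val ≤ m').image fun l => Y l ω) = imgC k (m' + 1) y := by
        rw [filt_le_lt]
        exact imgC_congr fun l hl => hY l hl
      have h2 : ((Finset.univ.filter fun l : Fin k => l.val ≤ m').image fun l => X l ω) = imgC k (m' + 1) p := by
        rw [filt_le_lt]
        exact imgC_congr fun l hl => hX l hl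
      rw [h1, h2]
      exact hZ
  refine ⟨⟨fun hYZ => ?_, hpair.1⟩, hpair.2, hZX⟩
  by_contra hB
  exact hZX ((hpair.2 hB) ▸ hYZ).symm

/-- existence of the residual element -/
theorem compatC {S : Finset α} {a : α} (ha : a ∉ S) {k m : ℕ} (hmk : m ≤ k) {p y : Fin k → α}
    (hpS : ∀ l : Fin k, l.val < m → p l ∈ S)
    (hpd : ∀ l l' : Fin k, l.val < m → l'.val < m → l ≠ l' → p l ≠ p l')
    (hyd : ∀ l l' : Fin k, l.val < m → l'.val < m → l ≠ l' → y l ≠ y l')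
    (hsub : imgC k m y ⊆ insert a (imgC k m p)) :
    ∃ Z, insert a (imgC k m p) \ imgC k m y = {Z} := by
  have hcardp : (imgC k m p).card = m := by
    rw [imgC, Finset.card_image_of_injOn, card_filt k m hmk]
    intro l hl l' hl' h
    by_contra hne
    exact hpd l l' (Finset.mem_filter.mp hl).2 (Finset.mem_filter.mp hl').2 hne h
  have hcardy : (imgC k m y).card = m := by
    rw [imgC, Finset.card_image_of_injOn, card_filt k m hmk]
    intro l hl l' hl' h
    by_contra hne
    exact hyd l l' (Finset.mem_filter.mp hl).2 (Finset.mem_filter.mp hl').2 hne h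
  have hanotin : a ∉ imgC k m p := fun hmem => ha (imgC_subset hpS hmem)
  apply Finset.card_eq_one.mp
  rw [Finset.card_sdiff_of_subset hsub, Finset.card_insert_of_notMem hanotin, hcardp, hcardy]
  omega

/-- the key set identity `T \ y[<m] = {Z} ∪ (S \ p[<m])` -/
theorem unionC {S : Finset α} {a : α} (ha : a ∉ S) {k m : ℕ} {p y : Fin k → α}
    (hpS : ∀ l : Fin k, l.val < m → p l ∈ S)
    (hsub : imgC k m y ⊆ insert a (imgC k m p)) {Z : α}
    (hZ : insert a (imgC k m p) \ imgC k m y = {Z}) :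
    insert a S \ imgC k m y = insert Z (S \ imgC k m p) ∧ Z ∉ S \ imgC k m p := by
  have hZin : Z ∈ insert a (imgC k m p) ∧ Z ∉ imgC k m y := by
    have : Z ∈ insert a (imgC k m p) \ imgC k m y := by
      rw [hZ]; exact Finset.mem_singleton_self _
    exact Finset.mem_sdiff.mp this
  have hZnot : Z ∉ S \ imgC k m p := by
    intro h
    obtain ⟨h1, h2⟩ := Finset.mem_sdiff.mp h
    rcases Finset.mem_insert.mp hZin.1 with h' | h'
    · exact ha (h' ▸ h1)
    · exact h2 h'
  refine ⟨?_, hZnot⟩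
  ext c
  simp only [Finset.mem_sdiff, Finset.mem_insert]
  rw [← Finset.mem_sdiff (s := S) (t := imgC k m p)]
  constructor
  · rintro ⟨hcT, hcY⟩
    by_cases hc : c ∈ insert a (imgC k m p)
    · left
      have : c ∈ insert a (imgC k m p) \ imgC k m y := Finset.mem_sdiff.mpr ⟨hc, hcY⟩
      rw [hZ] at this
      exact Finset.mem_singleton.mp this
    · right
      rcases hcT with h | h
      · exact absurd (h ▸ Finset.mem_insert_self a (imgC k m p)) hc
      · exact Finset.mem_sdiff.mpr ⟨h, fun hmem => hc (Finset.mem_insert_of_mem hmem)⟩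
  · rintro (rfl | hc)
    · refine ⟨?_, hZin.2⟩
      rcases Finset.mem_insert.mp hZin.1 with h' | h'
      · exact Or.inl h'
      · exact Or.inr (imgC_subset hpS h')
    · obtain ⟨h1, h2⟩ := Finset.mem_sdiff.mp hc
      refine ⟨Or.inr h1, fun hmem => ?_⟩
      rcases Finset.mem_insert.mp (hsub hmem) with h' | h'
      · exact ha (h' ▸ h1)
      · exact h2 h'

/-- if the compatibility fails, the history event is null -/
theorem nullC {μ : Measure Ω} [IsProbabilityMeasure μ] {S : Finset α} {a : α} {k : ℕ}
    {X Y : Fin k → Ω → α} {B : Fin k → Set Ω}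
    (ha : a ∉ S)
    (hXmeas : ∀ j, Measurable (X j))
    (hXS : ∀ (j : Fin k) (ω : Ω), X j ω ∈ S)
    (hsum : ∑ x ∈ tupC S a k k, μ (evC X k x) = 1)
    (hY0 : ∀ (h0 : 0 < k) (ω : Ω),
      (ω ∈ B ⟨0, h0⟩ → Y ⟨0, h0⟩ ω = a) ∧ (ω ∉ B ⟨0, h0⟩ → Y ⟨0, h0⟩ ω = X ⟨0, h0⟩ ω))
    (hYsucc : ∀ (i : ℕ) (hi : i + 1 < k) (ω : Ω) (Z : α),
      insert a ((Finset.univ.filter fun l : Fin k => l.val ≤ i).image fun l => X l ω) \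
          ((Finset.univ.filter fun l : Fin k => l.val ≤ i).image fun l => Y l ω) = {Z} →
      (ω ∈ B ⟨i + 1, hi⟩ → Y ⟨i + 1, hi⟩ ω = Z) ∧
        (ω ∉ B ⟨i + 1, hi⟩ → Y ⟨i + 1, hi⟩ ω = X ⟨i + 1, hi⟩ ω))
    (m : ℕ) (hmk : m ≤ k) (p y : Fin k → α)
    (hnsub : ¬ imgC k m y ⊆ insert a (imgC k m p))
    (A : Set Ω) (hA : A ⊆ evC X m p ∩ evC Y m y) : μ A = 0 := by
  rw [measD hXmeas hsum A]
  convert measure_empty (μ := μ)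
  rw [Set.eq_empty_iff_forall_notMem]
  rintro ω ⟨hωA, hωD⟩
  obtain ⟨hX', hY'⟩ := hA hωA
  exact hnsub (pwsubC ha hXS hY0 hYsucc m hmk p y ω hωD hX' hY')

theorem hXlawConv {μ : Measure Ω} {S : Finset α} {w : α → ℝ} {k : ℕ} {X : Fin k → Ω → α}
    (hXlaw : ∀ (j : Fin k) (x : Fin k → α),
      (∀ l, l ≤ j → x l ∈ S) →
      (∀ l l', l ≤ j → l' ≤ j → l ≠ l' → x l ≠ x l') →
      μ {ω | ∀ l, l ≤ j → X l ω = x l} =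
        ENNReal.ofReal
            (w (x j) / ∑ c ∈ S \ (Finset.univ.filter (· < j)).image x, w c) *
          μ {ω | ∀ l, l < j → X l ω = x l}) :
    ∀ (n : ℕ) (hn : n < k) (x : Fin k → α), (∀ l : Fin k, l.val ≤ n → x l ∈ S) →
      (∀ l l' : Fin k, l.val ≤ n → l'.val ≤ n → l ≠ l' → x l ≠ x l') →
      μ (evC X (n+1) x)
        = ENNReal.ofReal (w (x ⟨n, hn⟩) / ∑ c ∈ S \ imgC k n x, w c) * μ (evC X n x) := by
  intro n hn x h1 h2
  have hb := hXlaw ⟨n, hn⟩ x (fun l hl => h1 l (Fin.le_def.mp hl))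
    (fun l l' hl hl' => h2 l l' (Fin.le_def.mp hl) (Fin.le_def.mp hl'))
  have e1 : {ω | ∀ l, l ≤ (⟨n, hn⟩ : Fin k) → X l ω = x l} = evC X (n+1) x := by
    ext ω
    simp only [Set.mem_setOf_eq, evC, Fin.le_def, Nat.lt_succ_iff]
  have e2 : {ω | ∀ l, l < (⟨n, hn⟩ : Fin k) → X l ω = x l} = evC X n x := by
    ext ω
    simp only [Set.mem_setOf_eq, evC, Fin.lt_def]
  have e3 : (Finset.univ.filter (· < (⟨n, hn⟩ : Fin k))).image x = imgC k n x := by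
    rw [filtFin hn]; rfl
  rw [e1, e2, e3] at hb
  exact hb

/-- conditionally on the first `m` values of `Y`, the `X`-chain still follows its law -/
theorem F4C {μ : Measure Ω} [IsProbabilityMeasure μ] {S : Finset α} {a : α} {w : α → ℝ} {k : ℕ}
    {X Y : Fin k → Ω → α} {B : Fin k → Set Ω}
    (ha : a ∉ S)
    (hXmeas : ∀ j, Measurable (X j)) (hYmeas : ∀ j, Measurable (Y j))
    (hBmeas : ∀ i, MeasurableSet (B i))
    (hXS : ∀ (j : Fin k) (ω : Ω), X j ω ∈ S)
    (hsum : ∑ x ∈ tupC S a k k, μ (evC X k x) = 1)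
    (hXlaw' : ∀ (n : ℕ) (hn : n < k) (x : Fin k → α), (∀ l : Fin k, l.val ≤ n → x l ∈ S) →
      (∀ l l' : Fin k, l.val ≤ n → l'.val ≤ n → l ≠ l' → x l ≠ x l') →
      μ (evC X (n+1) x)
        = ENNReal.ofReal (w (x ⟨n, hn⟩) / ∑ c ∈ S \ imgC k n x, w c) * μ (evC X n x))
    (hBcond : ∀ (i : Fin k) (x y : Fin k → α) (Z : α),
      insert a ((Finset.univ.filter (· < i)).image x) \
          ((Finset.univ.filter (· < i)).image y) = {Z} →
      μ (B i ∩ {ω | (∀ l, X l ω = x l) ∧ ∀ l, l < i → Y l ω = y l}) =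
        ENNReal.ofReal
            (w Z /
              ∑ c ∈ (insert a S) \ (Finset.univ.filter (· < i)).image y, w c) *
          μ {ω | (∀ l, X l ω = x l) ∧ ∀ l, l < i → Y l ω = y l})
    (hY0 : ∀ (h0 : 0 < k) (ω : Ω),
      (ω ∈ B ⟨0, h0⟩ → Y ⟨0, h0⟩ ω = a) ∧ (ω ∉ B ⟨0, h0⟩ → Y ⟨0, h0⟩ ω = X ⟨0, h0⟩ ω))
    (hYsucc : ∀ (i : ℕ) (hi : i + 1 < k) (ω : Ω) (Z : α),
      insert a ((Finset.univ.filter fun l : Fin k => l.val ≤ i).image fun l => X l ω) \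
          ((Finset.univ.filter fun l : Fin k => l.val ≤ i).image fun l => Y l ω) = {Z} →
      (ω ∈ B ⟨i + 1, hi⟩ → Y ⟨i + 1, hi⟩ ω = Z) ∧
        (ω ∉ B ⟨i + 1, hi⟩ → Y ⟨i + 1, hi⟩ ω = X ⟨i + 1, hi⟩ ω)) :
    ∀ (m : ℕ) (n : ℕ) (hn : n < k) (hmn : m ≤ n) (p y : Fin k → α),
      (∀ l : Fin k, l.val ≤ n → p l ∈ S) →
      (∀ l l' : Fin k, l.val ≤ n → l'.val ≤ n → l ≠ l' → p l ≠ p l') →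
      (∀ l l' : Fin k, l.val < m → l'.val < m → l ≠ l' → y l ≠ y l') →
      μ (evC X (n+1) p ∩ evC Y m y)
        = ENNReal.ofReal (w (p ⟨n, hn⟩) / ∑ c ∈ S \ imgC k n p, w c)
          * μ (evC X n p ∩ evC Y m y) := by
  intro m
  induction m with
  | zero =>
    intro n hn hmn p y hpS hpd hyd
    have e : evC Y 0 y = Set.univ := by
      ext ω; simp [evC]
    rw [e, Set.inter_univ, Set.inter_univ]
    exact hXlaw' n hn p hpS hpd
  | succ m ih =>
    intro n hn hmn p y hpS hpd hyd
    have hm : m < k := by omega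
    have hmn' : m ≤ n := by omega
    set r := ENNReal.ofReal (w (p ⟨n, hn⟩) / ∑ c ∈ S \ imgC k n p, w c) with hr
    have hihv := ih n hn hmn' p y hpS hpd (fun l l' hl hl' => hyd l l' (by omega) (by omega))
    by_cases hsub : imgC k m y ⊆ insert a (imgC k m p)
    · obtain ⟨Z, hZ⟩ := compatC ha (le_of_lt hm) (fun l hl => hpS l (by omega))
        (fun l l' hl hl' => hpd l l' (by omega) (by omega))
        (fun l l' hl hl' => hyd l l' (by omega) (by omega)) hsub
      set c' := ENNReal.ofReal (w Z / ∑ c ∈ insert a S \ imgC k m y, w c) with hc'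
      have hcoin1 := coinC hXmeas hYmeas hBmeas hXS hsum hBcond hm (by omega : m ≤ n + 1)
        (by omega : n + 1 ≤ k) p y Z hZ
      have hcoin2 := coinC hXmeas hYmeas hBmeas hXS hsum hBcond hm hmn'
        (le_of_lt hn) p y Z hZ
      -- finiteness
      have hfin : c' * (r * μ (evC X n p ∩ evC Y m y)) ≠ ⊤ :=
        ENNReal.mul_ne_top ENNReal.ofReal_ne_top (ENNReal.mul_ne_top ENNReal.ofReal_ne_top (measure_ne_top μ _))
      by_cases hyZ : y ⟨m, hm⟩ = Z
      · -- coin branch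
        have hev1 : (evC X (n+1) p ∩ evC Y (m+1) y) ∩ DgC S a X
            = (B ⟨m, hm⟩ ∩ (evC X (n+1) p ∩ evC Y m y)) ∩ DgC S a X := by
          ext ω
          simp only [Set.mem_inter_iff, and_congr_left_iff]
          intro hD
          constructor
          · rintro ⟨hXω, hYω⟩
            have pw := pwC ha hXS hY0 hYsucc m hm p y Z hZ ω hD
              (evC_mono (by omega) p hXω) (evC_mono (by omega) y hYω)
            exact ⟨pw.1.mp ((hYω ⟨m, hm⟩ (by show m < m + 1; omega)).trans hyZ), hXω,
              evC_mono (by omega) y hYω⟩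
          · rintro ⟨hB, hXω, hYω⟩
            have pw := pwC ha hXS hY0 hYsucc m hm p y Z hZ ω hD
              (evC_mono (by omega) p hXω) hYω
            refine ⟨hXω, ?_⟩
            rw [evC_succ hm y]
            exact ⟨hYω, (pw.1.mpr hB).trans hyZ.symm⟩
        have hev2 : (evC X n p ∩ evC Y (m+1) y) ∩ DgC S a X
            = (B ⟨m, hm⟩ ∩ (evC X n p ∩ evC Y m y)) ∩ DgC S a X := by
          ext ω
          simp only [Set.mem_inter_iff, and_congr_left_iff]
          intro hD
          constructor
          · rintro ⟨hXω, hYω⟩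
            have pw := pwC ha hXS hY0 hYsucc m hm p y Z hZ ω hD
              (evC_mono hmn' p hXω) (evC_mono (by omega) y hYω)
            exact ⟨pw.1.mp ((hYω ⟨m, hm⟩ (by show m < m + 1; omega)).trans hyZ), hXω,
              evC_mono (by omega) y hYω⟩
          · rintro ⟨hB, hXω, hYω⟩
            have pw := pwC ha hXS hY0 hYsucc m hm p y Z hZ ω hD
              (evC_mono hmn' p hXω) hYω
            refine ⟨hXω, ?_⟩
            rw [evC_succ hm y]
            exact ⟨hYω, (pw.1.mpr hB).trans hyZ.symm⟩
        calc μ (evC X (n+1) p ∩ evC Y (m+1) y)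
            = μ (B ⟨m, hm⟩ ∩ (evC X (n+1) p ∩ evC Y m y)) := measDeq hXmeas hsum hev1
          _ = c' * μ (evC X (n+1) p ∩ evC Y m y) := hcoin1
          _ = c' * (r * μ (evC X n p ∩ evC Y m y)) := by rw [hihv]
          _ = r * (c' * μ (evC X n p ∩ evC Y m y)) := by ring
          _ = r * μ (B ⟨m, hm⟩ ∩ (evC X n p ∩ evC Y m y)) := by rw [hcoin2]
          _ = r * μ (evC X n p ∩ evC Y (m+1) y) := by rw [← measDeq hXmeas hsum hev2]
      · by_cases hyX : y ⟨m, hm⟩ = p ⟨m, hm⟩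
        · -- X branch
          have hev1 : (evC X (n+1) p ∩ evC Y (m+1) y) ∩ DgC S a X
              = ((evC X (n+1) p ∩ evC Y m y) \ B ⟨m, hm⟩) ∩ DgC S a X := by
            ext ω
            simp only [Set.mem_inter_iff, Set.mem_diff, and_congr_left_iff]
            intro hD
            constructor
            · rintro ⟨hXω, hYω⟩
              have pw := pwC ha hXS hY0 hYsucc m hm p y Z hZ ω hD
                (evC_mono (by omega) p hXω) (evC_mono (by omega) y hYω)
              refine ⟨⟨hXω, evC_mono (by omega) y hYω⟩, fun hB => ?_⟩
              have h1 : Y ⟨m, hm⟩ ω = y ⟨m, hm⟩ := hYω ⟨m, hm⟩ (by show m < m + 1; omega)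
              have h2 : X ⟨m, hm⟩ ω = p ⟨m, hm⟩ := hXω ⟨m, hm⟩ (by show m < _; omega)
              exact pw.2.2 ((pw.1.mpr hB).symm.trans (h1.trans (hyX.trans h2.symm)))
            · rintro ⟨⟨hXω, hYω⟩, hB⟩
              have pw := pwC ha hXS hY0 hYsucc m hm p y Z hZ ω hD
                (evC_mono (by omega) p hXω) hYω
              refine ⟨hXω, ?_⟩
              rw [evC_succ hm y]
              refine ⟨hYω, ?_⟩
              show Y ⟨m, hm⟩ ω = y ⟨m, hm⟩
              rw [pw.2.1 hB, hXω ⟨m, hm⟩ (by show m < _; omega), hyX]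
          have hev2 : (evC X n p ∩ evC Y (m+1) y) ∩ DgC S a X
              = ((evC X n p ∩ evC Y m y) \ B ⟨m, hm⟩) ∩ DgC S a X := by
            ext ω
            simp only [Set.mem_inter_iff, Set.mem_diff, and_congr_left_iff]
            intro hD
            constructor
            · rintro ⟨hXω, hYω⟩
              have pw := pwC ha hXS hY0 hYsucc m hm p y Z hZ ω hD
                (evC_mono hmn' p hXω) (evC_mono (by omega) y hYω)
              refine ⟨⟨hXω, evC_mono (by omega) y hYω⟩, fun hB => ?_⟩
              have h1 : Y ⟨m, hm⟩ ω = y ⟨m, hm⟩ := hYω ⟨m, hm⟩ (by show m < m + 1; omega)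
              have h2 : X ⟨m, hm⟩ ω = p ⟨m, hm⟩ := hXω ⟨m, hm⟩ (by show m < _; omega)
              exact pw.2.2 ((pw.1.mpr hB).symm.trans (h1.trans (hyX.trans h2.symm)))
            · rintro ⟨⟨hXω, hYω⟩, hB⟩
              have pw := pwC ha hXS hY0 hYsucc m hm p y Z hZ ω hD
                (evC_mono hmn' p hXω) hYω
              refine ⟨hXω, ?_⟩
              rw [evC_succ hm y]
              refine ⟨hYω, ?_⟩
              show Y ⟨m, hm⟩ ω = y ⟨m, hm⟩
              rw [pw.2.1 hB, hXω ⟨m, hm⟩ (by show m < _; omega), hyX]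
          -- subtraction identities
          have hsplit1 : μ (evC X (n+1) p ∩ evC Y (m+1) y)
              + μ ((evC X (n+1) p ∩ evC Y m y) ∩ B ⟨m, hm⟩)
              = μ (evC X (n+1) p ∩ evC Y m y) := by
            rw [measDeq hXmeas hsum hev1, add_comm]
            exact measure_inter_add_diff _ (hBmeas _)
          have hsplit2 : μ (evC X n p ∩ evC Y (m+1) y)
              + μ ((evC X n p ∩ evC Y m y) ∩ B ⟨m, hm⟩)
              = μ (evC X n p ∩ evC Y m y) := by
            rw [measDeq hXmeas hsum hev2, add_comm]
            exact measure_inter_add_diff _ (hBmeas _)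
          rw [Set.inter_comm _ (B ⟨m, hm⟩)] at hsplit1 hsplit2
          rw [hcoin1, hihv] at hsplit1
          rw [hcoin2] at hsplit2
          -- multiply hsplit2 by r
          have hsplit2' : ENNReal.ofReal (w (p ⟨n, hn⟩) / ∑ c ∈ S \ imgC k n p, w c)
                * μ (evC X n p ∩ evC Y (m+1) y)
              + ENNReal.ofReal (w Z / ∑ c ∈ insert a S \ imgC k m y, w c)
                * (ENNReal.ofReal (w (p ⟨n, hn⟩) / ∑ c ∈ S \ imgC k n p, w c)
                  * μ (evC X n p ∩ evC Y m y))
              = ENNReal.ofReal (w (p ⟨n, hn⟩) / ∑ c ∈ S \ imgC k n p, w c)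
                * μ (evC X n p ∩ evC Y m y) := by
            calc ENNReal.ofReal (w (p ⟨n, hn⟩) / ∑ c ∈ S \ imgC k n p, w c)
                  * μ (evC X n p ∩ evC Y (m+1) y)
                + ENNReal.ofReal (w Z / ∑ c ∈ insert a S \ imgC k m y, w c)
                  * (ENNReal.ofReal (w (p ⟨n, hn⟩) / ∑ c ∈ S \ imgC k n p, w c)
                    * μ (evC X n p ∩ evC Y m y))
                = ENNReal.ofReal (w (p ⟨n, hn⟩) / ∑ c ∈ S \ imgC k n p, w c)
                  * (μ (evC X n p ∩ evC Y (m+1) y)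
                    + ENNReal.ofReal (w Z / ∑ c ∈ insert a S \ imgC k m y, w c)
                      * μ (evC X n p ∩ evC Y m y)) := by ring
              _ = _ := by rw [hsplit2]
          exact WithTop.add_right_cancel hfin (hsplit1.trans hsplit2'.symm)
        · -- impossible-value branch : both sides vanish
          have hzero : ∀ (n' : ℕ), m < n' →
              μ (evC X n' p ∩ evC Y (m+1) y) = 0 := by
            intro n' hmn''
            rw [measD hXmeas hsum]
            convert measure_empty (μ := μ)
            rw [Set.eq_empty_iff_forall_notMem]
            rintro ω ⟨⟨hXω, hYω⟩, hD⟩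
            have pw := pwC ha hXS hY0 hYsucc m hm p y Z hZ ω hD
              (evC_mono (by omega) p hXω) (evC_mono (by omega) y hYω)
            have h1 : Y ⟨m, hm⟩ ω = y ⟨m, hm⟩ := hYω ⟨m, hm⟩ (by show m < m + 1; omega)
            by_cases hB : ω ∈ B ⟨m, hm⟩
            · exact hyZ (h1.symm.trans (pw.1.mpr hB))
            · exact hyX (h1.symm.trans ((pw.2.1 hB).trans (hXω ⟨m, hm⟩ (by show m < _; omega))))
          rw [hzero (n+1) (by omega), hzero n (by omega), mul_zero]
    · -- incompatible history : both sides vanish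
      have h1 : μ (evC X (n+1) p ∩ evC Y (m+1) y) = 0 :=
        nullC ha hXmeas hXS hsum hY0 hYsucc m (le_of_lt hm) p y hsub _
          (fun ω hω => ⟨evC_mono (by omega) p hω.1, evC_mono (by omega) y hω.2⟩)
      have h2 : μ (evC X n p ∩ evC Y (m+1) y) = 0 :=
        nullC ha hXmeas hXS hsum hY0 hYsucc m (le_of_lt hm) p y hsub _
          (fun ω hω => ⟨evC_mono hmn' p hω.1, evC_mono (by omega) y hω.2⟩)
      rw [h1, h2, mul_zero]

/-- the main one-step recursion for the `Y` chain -/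
theorem LstepC {μ : Measure Ω} [IsProbabilityMeasure μ] {S : Finset α} {a : α} {w : α → ℝ} {k : ℕ}
    {X Y : Fin k → Ω → α} {B : Fin k → Set Ω}
    (ha : a ∉ S) (hw : ∀ c ∈ insert a S, 0 < w c) (hk : k ≤ S.card)
    (hXmeas : ∀ j, Measurable (X j)) (hYmeas : ∀ j, Measurable (Y j))
    (hBmeas : ∀ i, MeasurableSet (B i))
    (hXS : ∀ (j : Fin k) (ω : Ω), X j ω ∈ S)
    (hsum : ∑ x ∈ tupC S a k k, μ (evC X k x) = 1)
    (hXlaw' : ∀ (n : ℕ) (hn : n < k) (x : Fin k → α), (∀ l : Fin k, l.val ≤ n → x l ∈ S) →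
      (∀ l l' : Fin k, l.val ≤ n → l'.val ≤ n → l ≠ l' → x l ≠ x l') →
      μ (evC X (n+1) x)
        = ENNReal.ofReal (w (x ⟨n, hn⟩) / ∑ c ∈ S \ imgC k n x, w c) * μ (evC X n x))
    (hBcond : ∀ (i : Fin k) (x y : Fin k → α) (Z : α),
      insert a ((Finset.univ.filter (· < i)).image x) \
          ((Finset.univ.filter (· < i)).image y) = {Z} →
      μ (B i ∩ {ω | (∀ l, X l ω = x l) ∧ ∀ l, l < i → Y l ω = y l}) =
        ENNReal.ofReal
            (w Z /
              ∑ c ∈ (insert a S) \ (Finset.univ.filter (· < i)).image y, w c) *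
          μ {ω | (∀ l, X l ω = x l) ∧ ∀ l, l < i → Y l ω = y l})
    (hY0 : ∀ (h0 : 0 < k) (ω : Ω),
      (ω ∈ B ⟨0, h0⟩ → Y ⟨0, h0⟩ ω = a) ∧ (ω ∉ B ⟨0, h0⟩ → Y ⟨0, h0⟩ ω = X ⟨0, h0⟩ ω))
    (hYsucc : ∀ (i : ℕ) (hi : i + 1 < k) (ω : Ω) (Z : α),
      insert a ((Finset.univ.filter fun l : Fin k => l.val ≤ i).image fun l => X l ω) \
          ((Finset.univ.filter fun l : Fin k => l.val ≤ i).image fun l => Y l ω) = {Z} →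
      (ω ∈ B ⟨i + 1, hi⟩ → Y ⟨i + 1, hi⟩ ω = Z) ∧
        (ω ∉ B ⟨i + 1, hi⟩ → Y ⟨i + 1, hi⟩ ω = X ⟨i + 1, hi⟩ ω))
    (m : ℕ) (hm : m < k) (y : Fin k → α)
    (hyT : ∀ l : Fin k, l.val < m + 1 → y l ∈ insert a S)
    (hyd : ∀ l l' : Fin k, l.val < m + 1 → l'.val < m + 1 → l ≠ l' → y l ≠ y l') :
    μ (evC Y (m+1) y)
      = ENNReal.ofReal (w (y ⟨m, hm⟩) / ∑ c ∈ insert a S \ imgC k m y, w c)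
        * μ (evC Y m y) := by
  have hyd' : ∀ l l' : Fin k, l.val < m → l'.val < m → l ≠ l' → y l ≠ y l' :=
    fun l l' hl hl' => hyd l l' (by omega) (by omega)
  rw [partC hXmeas hXS hsum (le_of_lt hm) (evC_meas hYmeas (m+1) y),
    partC hXmeas hXS hsum (le_of_lt hm) (evC_meas hYmeas m y), Finset.mul_sum]
  refine Finset.sum_congr rfl fun p hp => ?_
  obtain ⟨hp1, hp2, hp3⟩ := mem_tupC.mp hp
  by_cases hsub : imgC k m y ⊆ insert a (imgC k m p)
  · obtain ⟨Z, hZ⟩ := compatC ha (le_of_lt hm) hp1 hp3 hyd' hsub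
    have hZT : Z ∈ insert a S := by
      have hZin : Z ∈ insert a (imgC k m p) := by
        have : Z ∈ insert a (imgC k m p) \ imgC k m y := by
          rw [hZ]; exact Finset.mem_singleton_self _
        exact (Finset.mem_sdiff.mp this).1
      rcases Finset.mem_insert.mp hZin with h | h
      · exact h ▸ Finset.mem_insert_self _ _
      · exact Finset.mem_insert_of_mem (imgC_subset hp1 h)
    by_cases hyZ : y ⟨m, hm⟩ = Z
    · -- coin branch
      have hev : (evC Y (m+1) y ∩ evC X m p) ∩ DgC S a X
          = (B ⟨m, hm⟩ ∩ (evC X m p ∩ evC Y m y)) ∩ DgC S a X := by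
        ext ω
        simp only [Set.mem_inter_iff, and_congr_left_iff]
        intro hD
        constructor
        · rintro ⟨hYω, hXω⟩
          have pw := pwC ha hXS hY0 hYsucc m hm p y Z hZ ω hD hXω (evC_mono (by omega) y hYω)
          exact ⟨pw.1.mp ((hYω ⟨m, hm⟩ (by show m < m + 1; omega)).trans hyZ), hXω,
            evC_mono (by omega) y hYω⟩
        · rintro ⟨hB, hXω, hYω⟩
          have pw := pwC ha hXS hY0 hYsucc m hm p y Z hZ ω hD hXω hYω
          refine ⟨?_, hXω⟩
          rw [evC_succ hm y]
          exact ⟨hYω, (pw.1.mpr hB).trans hyZ.symm⟩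
      rw [measDeq hXmeas hsum hev,
        coinC hXmeas hYmeas hBmeas hXS hsum hBcond hm le_rfl (le_of_lt hm) p y Z hZ,
        ← hyZ, Set.inter_comm (evC Y m y)]
    · -- here necessarily `y m ∈ S \ p[<m]`
      have hymem : y ⟨m, hm⟩ ∈ S \ imgC k m p := by
        by_cases hin : y ⟨m, hm⟩ ∈ insert a (imgC k m p)
        · exfalso
          have hyimg : y ⟨m, hm⟩ ∈ imgC k m y := by
            by_contra hno
            have : y ⟨m, hm⟩ ∈ insert a (imgC k m p) \ imgC k m y :=
              Finset.mem_sdiff.mpr ⟨hin, hno⟩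
            rw [hZ] at this
            exact hyZ (Finset.mem_singleton.mp this)
          obtain ⟨l, hl, hle⟩ := Finset.mem_image.mp hyimg
          have hl2 := (Finset.mem_filter.mp hl).2
          exact hyd l ⟨m, hm⟩ (by omega) (by show m < m + 1; omega)
            (fun hc => by rw [hc] at hl2; simp at hl2) hle
        · rcases Finset.mem_insert.mp (hyT ⟨m, hm⟩ (by show m < m + 1; omega)) with h | h
          · exact absurd (h ▸ Finset.mem_insert_self a (imgC k m p)) hin
          · exact Finset.mem_sdiff.mpr ⟨h, fun hmem => hin (Finset.mem_insert_of_mem hmem)⟩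
      obtain ⟨hyS, hyimgp⟩ := Finset.mem_sdiff.mp hymem
      -- the unique compatible extension of `p`
      set q := fun l : Fin k => if l.val < m then p l else if l.val = m then y ⟨m, hm⟩ else a
        with hqdef
      have hqagree : ∀ l : Fin k, l.val < m → q l = p l := fun l hl => if_pos hl
      have hqm : q ⟨m, hm⟩ = y ⟨m, hm⟩ := by
        show (if m < m then _ else if m = m then _ else _) = _
        simp
      have hq : q ∈ tupC S a k (m+1) := by
        refine mem_tupC.mpr ⟨fun l hl => ?_, fun l hl => ?_, fun l l' hl hl' hne => ?_⟩
        · by_cases h : l.val < m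
          · rw [hqagree l h]; exact hp1 l h
          · have hlm : l.val = m := by omega
            show (if l.val < m then _ else if l.val = m then _ else _) ∈ S
            rw [if_neg h, if_pos hlm]; exact hyS
        · show (if l.val < m then _ else if l.val = m then _ else _) = a
          rw [if_neg (by omega), if_neg (by omega)]
        · show (if l.val < m then p l else if l.val = m then _ else _)
            ≠ (if l'.val < m then p l' else if l'.val = m then _ else _)
          by_cases h : l.val < m <;> by_cases h' : l'.val < m
          · rw [if_pos h, if_pos h']; exact hp3 l l' h h' hne
          · rw [if_pos h, if_neg h', if_pos (by omega)]
            intro hc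
            exact hyimgp (Finset.mem_image.mpr
              ⟨l, Finset.mem_filter.mpr ⟨Finset.mem_univ _, h⟩, hc⟩)
          · rw [if_neg h, if_pos (by omega), if_pos h']
            intro hc
            exact hyimgp (Finset.mem_image.mpr
              ⟨l', Finset.mem_filter.mpr ⟨Finset.mem_univ _, h'⟩, hc.symm⟩)
          · exact absurd (Fin.ext (by omega) : l = l') hne
      have himgq : imgC k m q = imgC k m p := imgC_congr hqagree
      have hevXq : evC X m q = evC X m p := by
        ext ω
        constructor <;> intro hω l hl
        · rw [← hqagree l hl]; exact hω l hl
        · rw [hqagree l hl]; exact hω l hl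
      have hZq : insert a (imgC k m q) \ imgC k m y = {Z} := by rw [himgq]; exact hZ
      -- expand over the (m+1)-prefix of X
      rw [partC hXmeas hXS hsum (hm : m + 1 ≤ k)
        ((evC_meas hYmeas (m+1) y).inter (evC_meas hXmeas m p))]
      rw [Finset.sum_eq_single_of_mem q hq ?hother]
      case hother =>
        intro x hx hne
        obtain ⟨hx1, hx2, hx3⟩ := mem_tupC.mp hx
        by_cases hext : ∀ l : Fin k, l.val < m → x l = p l
        · have hxm : x ⟨m, hm⟩ ≠ y ⟨m, hm⟩ := by
            intro hc
            apply hne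
            funext l
            by_cases h : l.val < m
            · rw [hext l h, hqagree l h]
            · by_cases h' : l.val = m
              · have : l = ⟨m, hm⟩ := Fin.ext (by simp [h'])
                rw [this, hc, hqm]
              · rw [hx2 l (by omega)]
                show _ = (if l.val < m then _ else if l.val = m then _ else _)
                rw [if_neg h, if_neg h']
          rw [measD hXmeas hsum]
          convert measure_empty (μ := μ)
          rw [Set.eq_empty_iff_forall_notMem]
          rintro ω ⟨⟨⟨hYω, hXω⟩, hXx⟩, hD⟩
          have pw := pwC ha hXS hY0 hYsucc m hm p y Z hZ ω hD hXω (evC_mono (by omega) y hYω)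
          have h1 : Y ⟨m, hm⟩ ω = y ⟨m, hm⟩ := hYω ⟨m, hm⟩ (by show m < m + 1; omega)
          by_cases hB : ω ∈ B ⟨m, hm⟩
          · exact hyZ (h1.symm.trans (pw.1.mpr hB))
          · exact hxm ((hXx ⟨m, hm⟩ (by show m < m + 1; omega)).symm.trans
              ((pw.2.1 hB).symm.trans h1))
        · push_neg at hext
          obtain ⟨l, hl, hlne⟩ := hext
          convert measure_empty (μ := μ)
          rw [Set.eq_empty_iff_forall_notMem]
          rintro ω ⟨⟨-, hXω⟩, hXx⟩
          exact hlne ((hXx l (by omega)).symm.trans (hXω l hl))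
      -- single remaining term
      have hsetq : (evC Y (m+1) y ∩ evC X m p) ∩ evC X (m+1) q
          = evC X (m+1) q ∩ evC Y (m+1) y := by
        ext ω
        constructor
        · rintro ⟨⟨h1, -⟩, h2⟩
          exact ⟨h2, h1⟩
        · rintro ⟨h1, h2⟩
          exact ⟨⟨h2, fun l hl => by rw [h1 l (by omega), hqagree l hl]⟩, h1⟩
      rw [hsetq]
      -- event identity : `Y_{m} = y_m` ↔ no coin
      have hev : (evC X (m+1) q ∩ evC Y (m+1) y) ∩ DgC S a X
          = ((evC X (m+1) q ∩ evC Y m y) \ B ⟨m, hm⟩) ∩ DgC S a X := by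
        ext ω
        simp only [Set.mem_inter_iff, Set.mem_diff, and_congr_left_iff]
        intro hD
        constructor
        · rintro ⟨hXω, hYω⟩
          have pw := pwC ha hXS hY0 hYsucc m hm p y Z hZ ω hD
            (hevXq ▸ evC_mono (by omega) q hXω) (evC_mono (by omega) y hYω)
          refine ⟨⟨hXω, evC_mono (by omega) y hYω⟩, fun hB => ?_⟩
          exact hyZ ((hYω ⟨m, hm⟩ (by show m < m + 1; omega)).symm.trans (pw.1.mpr hB))
        · rintro ⟨⟨hXω, hYω⟩, hB⟩
          have pw := pwC ha hXS hY0 hYsucc m hm p y Z hZ ω hD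
            (hevXq ▸ evC_mono (by omega) q hXω) hYω
          refine ⟨hXω, ?_⟩
          rw [evC_succ hm y]
          refine ⟨hYω, ?_⟩
          show Y ⟨m, hm⟩ ω = y ⟨m, hm⟩
          rw [pw.2.1 hB, hXω ⟨m, hm⟩ (by show m < m + 1; omega), hqm]
      -- abbreviations
      have hsplitq : μ ((evC X (m+1) q ∩ evC Y (m+1) y))
          + μ (B ⟨m, hm⟩ ∩ (evC X (m+1) q ∩ evC Y m y))
          = μ (evC X (m+1) q ∩ evC Y m y) := by
        rw [measDeq hXmeas hsum hev, add_comm, Set.inter_comm (B ⟨m, hm⟩)]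
        exact measure_inter_add_diff _ (hBmeas _)
      have hcoinq := coinC hXmeas hYmeas hBmeas hXS hsum hBcond hm (by omega : m ≤ m + 1)
        (hm : m + 1 ≤ k) q y Z hZq
      have hF4q := F4C ha hXmeas hYmeas hBmeas hXS hsum hXlaw' hBcond hY0 hYsucc m m hm
        le_rfl q y
        (fun l hl => (mem_tupC.mp hq).1 l (by omega))
        (fun l l' hl hl' hne => (mem_tupC.mp hq).2.2 l l' (by omega) (by omega) hne)
        hyd'
      rw [hqm, himgq, hevXq] at hF4q
      -- arithmetic
      have hunion := unionC ha hp1 hsub hZ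
      have hWU : ∑ c ∈ insert a S \ imgC k m y, w c
          = w Z + ∑ c ∈ S \ imgC k m p, w c := by
        rw [hunion.1, Finset.sum_insert hunion.2]
      have hwS : 0 < ∑ c ∈ S \ imgC k m p, w c := sdiff_nonempty_pos hw hk hm
      have hwZ : 0 < w Z := hw Z hZT
      have hwy : 0 < w (y ⟨m, hm⟩) := hw _ (Finset.mem_insert_of_mem hyS)
      have hwU : 0 < ∑ c ∈ insert a S \ imgC k m y, w c := by rw [hWU]; positivity
      have hreal : w (y ⟨m, hm⟩) / (∑ c ∈ insert a S \ imgC k m y, w c)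
          + (w Z / ∑ c ∈ insert a S \ imgC k m y, w c)
            * (w (y ⟨m, hm⟩) / ∑ c ∈ S \ imgC k m p, w c)
          = w (y ⟨m, hm⟩) / ∑ c ∈ S \ imgC k m p, w c := by
        rw [hWU]
        field_simp
        ring
      -- put everything together
      rw [hcoinq, hF4q] at hsplitq
      have htarget : ENNReal.ofReal (w (y ⟨m, hm⟩) / ∑ c ∈ insert a S \ imgC k m y, w c)
            * μ (evC Y m y ∩ evC X m p)
          + ENNReal.ofReal (w Z / ∑ c ∈ insert a S \ imgC k m y, w c)
            * (ENNReal.ofReal (w (y ⟨m, hm⟩) / ∑ c ∈ S \ imgC k m p, w c)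
              * μ (evC X m p ∩ evC Y m y))
          = ENNReal.ofReal (w (y ⟨m, hm⟩) / ∑ c ∈ S \ imgC k m p, w c)
            * μ (evC X m p ∩ evC Y m y) := by
        rw [Set.inter_comm (evC Y m y), ← mul_assoc, ← ENNReal.ofReal_mul (by positivity),
          ← add_mul, ← ENNReal.ofReal_add (by positivity) (by positivity), hreal]
      have hfin : ENNReal.ofReal (w Z / ∑ c ∈ insert a S \ imgC k m y, w c)
          * (ENNReal.ofReal (w (y ⟨m, hm⟩) / ∑ c ∈ S \ imgC k m p, w c)
            * μ (evC X m p ∩ evC Y m y)) ≠ ⊤ :=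
        ENNReal.mul_ne_top ENNReal.ofReal_ne_top
          (ENNReal.mul_ne_top ENNReal.ofReal_ne_top (measure_ne_top μ _))
      exact WithTop.add_right_cancel hfin (hsplitq.trans htarget.symm)
  · -- incompatible history
    have h1 : μ (evC Y (m+1) y ∩ evC X m p) = 0 :=
      nullC ha hXmeas hXS hsum hY0 hYsucc m (le_of_lt hm) p y hsub _
        (fun ω hω => ⟨hω.2, evC_mono (by omega) y hω.1⟩)
    have h2 : μ (evC Y m y ∩ evC X m p) = 0 :=
      nullC ha hXmeas hXS hsum hY0 hYsucc m (le_of_lt hm) p y hsub _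
        (fun ω hω => ⟨hω.2, hω.1⟩)
    rw [h1, h2, mul_zero]

end Cascade7

/-- **Cascade Lemma.**  Let `S` be a finite set with `|S| ≥ k`, `a ∉ S`,
`T = insert a S`, and `w` strictly positive on `T`.  Let `(X 0, …, X (k-1))` be a
`k`-sample without replacement from `S` with respect to `w` (sequential definition,
phrased multiplicatively).  Define `(Y 0, …, Y (k-1))` by the cascade construction:
`Y 0 = a` on the event `B 0` (which, conditionally on any history, has probability
`w a / w T`), else `Y 0 = X 0`; and for `i + 1 < k`, letting `Z` be the unique element of
`{X 0, …, X i, a} \ {Y 0, …, Y i}` and `U i = T \ {Y 0, …, Y i}`, set `Y (i+1) = Z` on the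
event `B (i+1)` (which, conditionally on any history, has probability `w Z / w (U i)`),
else `Y (i+1) = X (i+1)`; the coin flips being independent of everything else, as
expressed by the conditional-probability hypothesis `hBcond`.  Then for every `i < k`
the tuple `(Y 0, …, Y i)` is an `(i+1)`-sample without replacement from `T`:
for all pairwise distinct `y 0, …, y i ∈ T`,
`P(Y 0 = y 0, …, Y i = y i) = ∏_{j ≤ i} w (y j) / (w T − ∑_{l < j} w (y l))`. -/
theorem statement7 {Ω α : Type*} [MeasurableSpace Ω] [MeasurableSpace α]
    [MeasurableSingletonClass α] [DecidableEq α]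
    (μ : Measure Ω) [IsProbabilityMeasure μ]
    (S : Finset α) (a : α) (ha : a ∉ S)
    (w : α → ℝ) (hw : ∀ c ∈ insert a S, 0 < w c)
    (k : ℕ) (hk : k ≤ S.card)
    (X : Fin k → Ω → α)
    (hXmeas : ∀ j, Measurable (X j))
    (hXS : ∀ (j : Fin k) (ω : Ω), X j ω ∈ S)
    -- `X` is a `k`-sample without replacement from `S` (sequential definition):
    (hXlaw : ∀ (j : Fin k) (x : Fin k → α),
      (∀ l, l ≤ j → x l ∈ S) →
      (∀ l l', l ≤ j → l' ≤ j → l ≠ l' → x l ≠ x l') →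
      μ {ω | ∀ l, l ≤ j → X l ω = x l} =
        ENNReal.ofReal
            (w (x j) / ∑ c ∈ S \ (Finset.univ.filter (· < j)).image x, w c) *
          μ {ω | ∀ l, l < j → X l ω = x l})
    (B : Fin k → Set Ω) (hBmeas : ∀ i, MeasurableSet (B i))
    (Y : Fin k → Ω → α) (hYmeas : ∀ i, Measurable (Y i))
    -- the cascade update rules:
    (hY0 : ∀ (h0 : 0 < k) (ω : Ω),
      (ω ∈ B ⟨0, h0⟩ → Y ⟨0, h0⟩ ω = a) ∧ (ω ∉ B ⟨0, h0⟩ → Y ⟨0, h0⟩ ω = X ⟨0, h0⟩ ω))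
    (hYsucc : ∀ (i : ℕ) (hi : i + 1 < k) (ω : Ω) (Z : α),
      insert a ((Finset.univ.filter fun l : Fin k => l.val ≤ i).image fun l => X l ω) \
          ((Finset.univ.filter fun l : Fin k => l.val ≤ i).image fun l => Y l ω) = {Z} →
      (ω ∈ B ⟨i + 1, hi⟩ → Y ⟨i + 1, hi⟩ ω = Z) ∧
        (ω ∉ B ⟨i + 1, hi⟩ → Y ⟨i + 1, hi⟩ ω = X ⟨i + 1, hi⟩ ω))
    -- the coin `B i` lands heads with (conditional) probability `w Z / w (U (i-1))`,
    -- independently of everything else: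
    (hBcond : ∀ (i : Fin k) (x y : Fin k → α) (Z : α),
      insert a ((Finset.univ.filter (· < i)).image x) \
          ((Finset.univ.filter (· < i)).image y) = {Z} →
      μ (B i ∩ {ω | (∀ l, X l ω = x l) ∧ ∀ l, l < i → Y l ω = y l}) =
        ENNReal.ofReal
            (w Z /
              ∑ c ∈ (insert a S) \ (Finset.univ.filter (· < i)).image y, w c) *
          μ {ω | (∀ l, X l ω = x l) ∧ ∀ l, l < i → Y l ω = y l}) :
    ∀ (i : Fin k) (y : Fin k → α),
      (∀ l, l ≤ i → y l ∈ insert a S) →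
      (∀ l l', l ≤ i → l' ≤ i → l ≠ l' → y l ≠ y l') →
      μ {ω | ∀ l, l ≤ i → Y l ω = y l} =
        ENNReal.ofReal (∏ j ∈ Finset.univ.filter (· ≤ i),
          w (y j) /
            ((∑ c ∈ insert a S, w c) - ∑ l ∈ Finset.univ.filter (· < j), w (y l))) := by
  intro i y hyT hyd
  have hXlaw' := hXlawConv hXlaw
  have hsum := tup_sum_one ha hw hk hXlaw' k le_rfl
  have key : ∀ m : ℕ, m ≤ k → ∀ z : Fin k → α,
      (∀ l : Fin k, l.val < m → z l ∈ insert a S) →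
      (∀ l l' : Fin k, l.val < m → l'.val < m → l ≠ l' → z l ≠ z l') →
      μ (evC Y m z) = ENNReal.ofReal (∏ j ∈ Finset.univ.filter (fun j : Fin k => j.val < m),
        w (z j) / ((∑ c ∈ insert a S, w c) - ∑ l ∈ Finset.univ.filter (· < j), w (z l))) := by
    intro m
    induction m with
    | zero =>
      intro _ z _ _
      have e : evC Y 0 z = Set.univ := by ext ω; simp [evC]
      have e2 : (Finset.univ.filter fun j : Fin k => j.val < 0) = ∅ := by
        ext j; simp
      rw [e, e2, measure_univ, Finset.prod_empty, ENNReal.ofReal_one]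
    | succ m ih =>
      intro hm1 z hzT hzd
      have hm : m < k := hm1
      have step := LstepC ha hw hk hXmeas hYmeas hBmeas hXS hsum hXlaw' hBcond hY0 hYsucc
        m hm z hzT hzd
      have hTsub : imgC k m z ⊆ insert a S := by
        intro c hc
        obtain ⟨l, hl, rfl⟩ := Finset.mem_image.mp hc
        exact hzT l (by have := (Finset.mem_filter.mp hl).2; omega)
      have hde : ∑ c ∈ insert a S \ imgC k m z, w c
          = (∑ c ∈ insert a S, w c)
            - ∑ l ∈ Finset.univ.filter (· < (⟨m, hm⟩ : Fin k)), w (z l) := by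
        rw [Finset.sum_sdiff_eq_sub hTsub]
        congr 1
        rw [filtFin hm]
        rw [show imgC k m z = (Finset.univ.filter fun l : Fin k => l.val < m).image z from rfl]
        rw [Finset.sum_image]
        intro l hl l' hl' h
        by_contra hne
        exact hzd l l' (by have := (Finset.mem_filter.mp hl).2; omega)
          (by have := (Finset.mem_filter.mp hl').2; omega) hne h
      have hpos : 0 < ∑ c ∈ insert a S \ imgC k m z, w c := by
        apply Finset.sum_pos
        · intro c hc
          exact hw c (Finset.mem_sdiff.mp hc).1
        · have h1 : (imgC k m z).card < (insert a S).card := by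
            rw [Finset.card_insert_of_notMem ha]
            have := imgC_card_le (k := k) (n := m) z
            omega
          by_contra hne
          rw [Finset.not_nonempty_iff_eq_empty, Finset.sdiff_eq_empty_iff_subset] at hne
          exact absurd (Finset.card_le_card hne) (by omega)
      have hins : (Finset.univ.filter fun j : Fin k => j.val < m + 1)
          = insert (⟨m, hm⟩ : Fin k) (Finset.univ.filter fun j : Fin k => j.val < m) :=
        filt_succ k m hm
      rw [hins, Finset.prod_insert (by simp)]
      rw [step, ih (le_of_lt hm) z (fun l hl => hzT l (by omega))
        (fun l l' hl hl' => hzd l l' (by omega) (by omega)), ← hde,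
        ← ENNReal.ofReal_mul (div_nonneg (le_of_lt (hw _ (hzT ⟨m, hm⟩ (by show m < m + 1; omega))))
          (le_of_lt hpos))]
  have hset : {ω | ∀ l, l ≤ i → Y l ω = y l} = evC Y (i.val + 1) y := by
    ext ω
    simp only [Set.mem_setOf_eq, evC, Fin.le_def, Nat.lt_succ_iff]
  have hfilter : Finset.univ.filter (· ≤ i)
      = Finset.univ.filter (fun j : Fin k => j.val < i.val + 1) := by
    ext j
    simp only [Finset.mem_filter, Finset.mem_univ, true_and, Fin.le_def, Nat.lt_succ_iff]
  rw [hset, hfilter]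
  exact key (i.val + 1) i.isLt y (fun l hl => hyT l (Fin.le_def.mpr (by omega)))
    (fun l l' hl hl' => hyd l l' (Fin.le_def.mpr (by omega)) (Fin.le_def.mpr (by omega)))
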